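/- arXiv:2006.06555 — 7 statements merged into one kernel-verified Lean document; each statement's English description precedes it below -/
import Mathlib

section
/- Let m be a positive integer and 0 < ν < 1 a constant. For all real k ≥ 2m / ln(1/ν), the infinite sum ∑_{i=0}^∞ (k + i)^m ν^i is at most k^m / (1 - √ν). -/
/-- For m a positive integer, 0 < ν < 1, and k ≥ 2m / ln(1/ν),
    ∑_{i=0}^∞ (k + i)^m ν^i ≤ k^m / (1 - √ν). -/
theorem stmt_0 (m : ℕ) (hm : 0 < m) (ν : ℝ) (hν0 : 0 < ν) (hν1 : ν < 1)
    (k : ℝ) (hk : (2 * m) / Real.log (1 / ν) ≤ k) :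
    ∑' i : ℕ, (k + (i : ℝ)) ^ m * ν ^ i ≤ k ^ m / (1 - Real.sqrt ν) := by
  have hlog : 0 < Real.log (1 / ν) := Real.log_pos (by rw [lt_div_iff₀ hν0]; linarith)
  have hk0 : 0 < k := lt_of_lt_of_le (div_pos (by positivity) hlog) hk
  have hs0 : 0 < Real.sqrt ν := Real.sqrt_pos.2 hν0
  have hs1 : Real.sqrt ν < 1 := by
    rw [show (1:ℝ) = Real.sqrt 1 from Real.sqrt_one.symm]
    exact Real.sqrt_lt_sqrt hν0.le hν1
  have hlogν : Real.log ν = -Real.log (1 / ν) := by rw [one_div, Real.log_inv, neg_neg]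
  rw [div_le_iff₀ hlog] at hk
  have key : ∀ i : ℕ, (k + (i : ℝ)) ^ m * ν ^ i ≤ k ^ m * Real.sqrt ν ^ i := by
    intro i
    have h1 : ν ^ i = Real.sqrt ν ^ i * Real.sqrt ν ^ i := by
      rw [← mul_pow, Real.mul_self_sqrt hν0.le]
    rw [h1, ← mul_assoc]
    apply mul_le_mul_of_nonneg_right _ (pow_nonneg hs0.le i)
    have h2 : k + (i : ℝ) ≤ k * Real.exp ((i : ℝ) / k) := by
      have he := Real.add_one_le_exp ((i : ℝ) / k)
      have : k * (1 + (i : ℝ) / k) = k + i := by field_simp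
      nlinarith
    have h3 : (k + (i : ℝ)) ^ m ≤ k ^ m * Real.exp ((i : ℝ) / k) ^ m := by
      rw [← mul_pow]
      exact pow_le_pow_left₀ (by positivity) h2 m
    have hsqrt : Real.sqrt ν = Real.exp (Real.log ν / 2) := by
      rw [Real.sqrt_eq_rpow, Real.rpow_def_of_pos hν0]
      ring_nf
    have hexp : Real.exp ((i : ℝ) / k) ^ m * Real.sqrt ν ^ i ≤ 1 := by
      rw [hsqrt, ← Real.exp_nat_mul, ← Real.exp_nat_mul, ← Real.exp_add,
        Real.exp_le_one_iff]
      have hmono : (m : ℝ) * ((i : ℝ) / k) + (i : ℝ) * (Real.log ν / 2) ≤ 0 := by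
        rw [hlogν]
        rw [mul_div_assoc'] at *
        rw [div_add' _ _ _ (ne_of_gt hk0)]
        apply div_nonpos_of_nonpos_of_nonneg _ hk0.le
        nlinarith [Nat.cast_nonneg (α := ℝ) i]
      exact hmono
    calc (k + (i : ℝ)) ^ m * Real.sqrt ν ^ i
        ≤ (k ^ m * Real.exp ((i : ℝ) / k) ^ m) * Real.sqrt ν ^ i :=
          mul_le_mul_of_nonneg_right h3 (pow_nonneg hs0.le i)
      _ = k ^ m * (Real.exp ((i : ℝ) / k) ^ m * Real.sqrt ν ^ i) := by ring
      _ ≤ k ^ m * 1 := mul_le_mul_of_nonneg_left hexp (by positivity)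
      _ = k ^ m := mul_one _
  have hgsum : Summable (fun i : ℕ => k ^ m * Real.sqrt ν ^ i) :=
    (summable_geometric_of_lt_one hs0.le hs1).mul_left _
  have hsum : Summable (fun i : ℕ => (k + (i : ℝ)) ^ m * ν ^ i) :=
    hgsum.of_nonneg_of_le
      (fun i => mul_nonneg (pow_nonneg (add_nonneg hk0.le (Nat.cast_nonneg i)) m)
        (pow_nonneg hν0.le i)) key
  calc ∑' i : ℕ, (k + (i : ℝ)) ^ m * ν ^ i
      ≤ ∑' i : ℕ, k ^ m * Real.sqrt ν ^ i := Summable.tsum_le_tsum key hsum hgsum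
    _ = k ^ m * ∑' i : ℕ, Real.sqrt ν ^ i := tsum_mul_left
    _ = k ^ m * (1 - Real.sqrt ν)⁻¹ := by rw [tsum_geometric_of_lt_one hs0.le hs1]
    _ = k ^ m / (1 - Real.sqrt ν) := (div_eq_mul_inv _ _).symm
end

section
/- Suppose F : ℝ^N → ℝ^N is a γ-contraction in the weighted infinity norm ‖·‖_v, i.e., ‖F(x) - F(y)‖_v ≤ γ ‖x - y‖_v for all x, y ∈ ℝ^N with 0 ≤ γ < 1. Then the composite operator x ↦ Π F(Φ x) from ℝ^M to ℝ^M is also a γ-contraction in ‖·‖_v, and consequently has a unique fixed point x* ∈ ℝ^M satisfying Π F(Φ x*) = x*. -/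
/-- If F is a γ-contraction in ‖·‖_v on ℝ^N, then x ↦ Π F(Φ x) is a
    γ-contraction on ℝ^M in ‖·‖_v, and has a unique fixed point. -/
theorem stmt_4 {N M : Type*} [Fintype N] [Fintype M] [DecidableEq M] [Nonempty N]
    (h : N → M) (hsurj : Function.Surjective h)
    (d : N → ℝ) (hd : ∀ i, 0 < d i)
    (v : M → ℝ) (hv : ∀ j, 0 < v j)
    (γ : ℝ) (hγ0 : 0 ≤ γ) (hγ1 : γ < 1)
    (F : (N → ℝ) → (N → ℝ))
    (hF : ∀ x y : N → ℝ,
      (⨆ i, |F x i - F y i| / v (h i)) ≤ γ * ⨆ i, |x i - y i| / v (h i))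
    (G : (M → ℝ) → (M → ℝ))
    (hG : ∀ x j, G x j =
      (∑ i ∈ Finset.univ.filter (fun i => h i = j), d i * F (fun i => x (h i)) i) /
      (∑ i ∈ Finset.univ.filter (fun i => h i = j), d i)) :
    (∀ x y : M → ℝ, (⨆ j, |G x j - G y j| / v j) ≤ γ * ⨆ j, |x j - y j| / v j) ∧
    (∃! xstar : M → ℝ, G xstar = xstar) := by
  have hMne : Nonempty M := Nonempty.map h ‹Nonempty N›
  -- key pointwise estimate
  have key : ∀ x y : M → ℝ, ∀ j, |G x j - G y j| / v j ≤ γ * ⨆ k, |x k - y k| / v k := by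
    intro x y j
    set X : N → ℝ := fun i => x (h i) with hX
    set Y : N → ℝ := fun i => y (h i) with hY
    have hfib : (Finset.univ.filter (fun i => h i = j)).Nonempty := by
      obtain ⟨i, hi⟩ := hsurj j
      exact ⟨i, by simp [hi]⟩
    have hspos : 0 < ∑ i ∈ Finset.univ.filter (fun i => h i = j), d i :=
      Finset.sum_pos (fun i _ => hd i) hfib
    set A : ℝ := ⨆ i, |F X i - F Y i| / v (h i) with hA
    have hA0 : 0 ≤ A := Real.iSup_nonneg (fun i => div_nonneg (abs_nonneg _) (hv _).le)
    have habs : |G x j - G y j| ≤ A * v j := by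
      rw [hG, hG, div_sub_div_same, abs_div, abs_of_pos hspos, div_le_iff₀ hspos,
        ← Finset.sum_sub_distrib]
      calc |∑ i ∈ Finset.univ.filter (fun i => h i = j), (d i * F X i - d i * F Y i)|
          ≤ ∑ i ∈ Finset.univ.filter (fun i => h i = j), |d i * F X i - d i * F Y i| :=
            Finset.abs_sum_le_sum_abs _ _
        _ ≤ ∑ i ∈ Finset.univ.filter (fun i => h i = j), d i * (A * v j) := by
            apply Finset.sum_le_sum
            intro i hi
            have hij : h i = j := by simpa using hi
            have h1 : |F X i - F Y i| / v (h i) ≤ A :=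
              le_ciSup (f := fun i => |F X i - F Y i| / v (h i))
                (Set.finite_range _).bddAbove i
            have h2 : |F X i - F Y i| ≤ A * v (h i) := (div_le_iff₀ (hv _)).mp h1
            rw [hij] at h2
            calc |d i * F X i - d i * F Y i| = d i * |F X i - F Y i| := by
                  rw [← mul_sub, abs_mul, abs_of_pos (hd i)]
              _ ≤ d i * (A * v j) := mul_le_mul_of_nonneg_left h2 (hd i).le
        _ = A * v j * ∑ i ∈ Finset.univ.filter (fun i => h i = j), d i := by
            rw [← Finset.sum_mul]; ring
    have h3 : |G x j - G y j| / v j ≤ A := (div_le_iff₀ (hv j)).mpr (by linarith [habs])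
    have h4 : A ≤ γ * ⨆ i, |X i - Y i| / v (h i) := hF X Y
    have h5 : (⨆ i, |X i - Y i| / v (h i)) ≤ ⨆ k, |x k - y k| / v k := by
      apply ciSup_le
      intro i
      exact le_ciSup (f := fun k => |x k - y k| / v k) (Set.finite_range _).bddAbove (h i)
    calc |G x j - G y j| / v j ≤ A := h3
      _ ≤ γ * ⨆ i, |X i - Y i| / v (h i) := h4
      _ ≤ γ * ⨆ k, |x k - y k| / v k := mul_le_mul_of_nonneg_left h5 hγ0
  refine ⟨fun x y => ciSup_le (fun j => key x y j), ?_⟩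
  -- conjugated map on the standard sup metric
  set G' : (M → ℝ) → (M → ℝ) := fun u j => G (fun k => u k * v k) j / v j with hG'
  have hlip : LipschitzWith ⟨γ, hγ0⟩ G' := by
    apply LipschitzWith.of_dist_le_mul
    intro u w
    have hsup : (⨆ k, |(fun k => u k * v k) k - (fun k => w k * v k) k| / v k) ≤ dist u w := by
      apply ciSup_le
      intro k
      have : |u k * v k - w k * v k| / v k = |u k - w k| := by
        rw [← sub_mul, abs_mul, abs_of_pos (hv k), mul_div_cancel_right₀ _ (hv k).ne']
      rw [this, ← Real.dist_eq]
      exact dist_le_pi_dist u w k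
    rw [dist_pi_le_iff (by positivity)]
    intro j
    have := key (fun k => u k * v k) (fun k => w k * v k) j
    have hdj : dist (G' u j) (G' w j) = |G (fun k => u k * v k) j - G (fun k => w k * v k) j| / v j := by
      rw [Real.dist_eq, hG', div_sub_div_same, abs_div, abs_of_pos (hv j)]
    rw [hdj]
    calc |G (fun k => u k * v k) j - G (fun k => w k * v k) j| / v j
        ≤ γ * ⨆ k, |(fun k => u k * v k) k - (fun k => w k * v k) k| / v k := this
      _ ≤ γ * dist u w := mul_le_mul_of_nonneg_left hsup hγ0
  have hC : ContractingWith ⟨γ, hγ0⟩ G' := ⟨by exact_mod_cast hγ1, hlip⟩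
  set u : M → ℝ := ContractingWith.fixedPoint G' hC with hu
  have hufix : Function.IsFixedPt G' u := hC.fixedPoint_isFixedPt
  refine ⟨fun j => u j * v j, ?_, ?_⟩
  · funext j
    have huj : G (fun k => u k * v k) j / v j = u j := congrFun hufix j
    rw [div_eq_iff (hv j).ne'] at huj
    exact huj
  · intro y hy
    have hwfix : Function.IsFixedPt G' (fun j => y j / v j) := by
      funext j
      simp only [hG']
      have : (fun k => y k / v k * v k) = y := by
        funext k; exact div_mul_cancel₀ _ (hv k).ne'
      rw [this, congrFun hy j]
    have := hC.fixedPoint_unique hwfix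
    funext j
    have hj := congrFun this j
    rw [← hu] at hj
    rw [← hj, div_mul_cancel₀ _ (hv j).ne']
end

section
/- Consider the stochastic approximation iterates x(t) ∈ ℝ^M defined by x(0) = 0 and, at each step t, x_{h(i_t)}(t+1) = (1 - α_t) x_{h(i_t)}(t) + α_t (F_{i_t}(Φ x(t)) + w(t)) with all other coordinates unchanged, where α_t ∈ [0,1], |w(t)| ≤ w̄ almost surely, and F satisfies ‖F(z)‖_v ≤ γ‖z‖_v + C for all z ∈ ℝ^N with 0 ≤ γ < 1 and C = (1+γ)‖y*‖_v. Then for all t, ‖x(t)‖_v ≤ (1/(1-γ)) ((1+γ)‖y*‖_v + w̄/v̲) almost surely, where v̲ = inf_{j∈M} v_j > 0. -/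
/-- The stochastic approximation iterates with state aggregation,
    starting from x(0) = 0, remain bounded:
    ‖x(t)‖_v ≤ (1/(1-γ)) ((1+γ)‖y*‖_v + w̄/v̲) for all t. -/
theorem stmt_6 {N M : Type*} [Fintype N] [Fintype M] [DecidableEq M] [Nonempty N]
    (h : N → M) (hsurj : Function.Surjective h)
    (v : M → ℝ) (hv : ∀ j, 0 < v j)
    (γ : ℝ) (hγ0 : 0 ≤ γ) (hγ1 : γ < 1)
    (F : (N → ℝ) → (N → ℝ)) (ystar : N → ℝ) (C : ℝ)
    (hC : C = (1 + γ) * ⨆ i, |ystar i| / v (h i))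
    (hF : ∀ z : N → ℝ, (⨆ i, |F z i| / v (h i)) ≤ γ * (⨆ i, |z i| / v (h i)) + C)
    (α : ℕ → ℝ) (hα : ∀ t, α t ∈ Set.Icc (0:ℝ) 1)
    (w : ℕ → ℝ) (wbar : ℝ) (hw : ∀ t, |w t| ≤ wbar)
    (i : ℕ → N)
    (x : ℕ → M → ℝ) (hx0 : x 0 = 0)
    (hupd : ∀ t j, x (t+1) j =
      if j = h (i t) then
        (1 - α t) * x t j + α t * (F (fun i' => x t (h i')) (i t) + w t)
      else x t j) :
    ∀ t, (⨆ j, |x t j| / v j) ≤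
      (1 / (1 - γ)) * ((1 + γ) * (⨆ i', |ystar i'| / v (h i')) + wbar / ⨅ j, v j) := by

  have hM : Nonempty M := ⟨h (Classical.arbitrary N)⟩
  have h1γ : (0:ℝ) < 1 - γ := by linarith
  set S := ⨆ i', |ystar i'| / v (h i') with hS
  set vmin := ⨅ j, v j with hvm
  have hbddv : BddBelow (Set.range v) := (Set.finite_range v).bddBelow
  have hvmin_le : ∀ j, vmin ≤ v j := fun j => ciInf_le hbddv j
  obtain ⟨j0, hj0⟩ := Finite.exists_min v
  have hvmin_pos : 0 < vmin := by
    have heq : vmin = v j0 := le_antisymm (ciInf_le hbddv j0) (le_ciInf hj0)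
    rw [heq]; exact hv j0
  have hwbar : 0 ≤ wbar := le_trans (abs_nonneg _) (hw 0)
  have hS0 : 0 ≤ S := by
    obtain ⟨i0⟩ := (inferInstance : Nonempty N)
    refine le_trans ?_ (le_ciSup (f := fun i' => |ystar i'| / v (h i')) (Finite.bddAbove_range _) i0)
    exact div_nonneg (abs_nonneg _) (hv _).le
  set B := (1 / (1 - γ)) * ((1 + γ) * S + wbar / vmin) with hB
  have hBid : γ * B + (C + wbar / vmin) = B := by
    rw [hC, hB]; field_simp; ring
  have hB0 : 0 ≤ B := by
    have hwv : 0 ≤ wbar / vmin := div_nonneg hwbar hvmin_pos.le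
    have : 0 ≤ (1 + γ) * S := by positivity
    positivity
  intro t
  induction t with
  | zero =>
    rw [hx0]
    simp only [Pi.zero_apply, abs_zero, zero_div, ciSup_const]
    exact hB0
  | succ t ih =>
    have hxt : ∀ j', |x t j'| / v j' ≤ B :=
      fun j' => le_trans (le_ciSup (f := fun j'' => |x t j''| / v j'') (Finite.bddAbove_range _) j') ih
    apply ciSup_le
    intro j
    rw [hupd t j]
    by_cases hj : j = h (i t)
    · simp only [if_pos hj]
      subst hj
      set z := fun i' => x t (h i') with hz
      obtain ⟨ha0, ha1⟩ := hα t
      have hV : 0 < v (h (i t)) := hv _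
      have hFz : |F z (i t)| ≤ (γ * B + C) * v (h (i t)) := by
        rw [← div_le_iff₀ hV]
        calc |F z (i t)| / v (h (i t)) ≤ ⨆ i', |F z i'| / v (h i') :=
              le_ciSup (f := fun i' => |F z i'| / v (h i')) (Finite.bddAbove_range _) (i t)
          _ ≤ γ * (⨆ i', |z i'| / v (h i')) + C := hF z
          _ ≤ γ * B + C := by
              have hzb : (⨆ i', |z i'| / v (h i')) ≤ B :=
                ciSup_le fun i' => hxt (h i')
              nlinarith
      have hX : |x t (h (i t))| ≤ B * v (h (i t)) := by
        have := hxt (h (i t)); rwa [div_le_iff₀ hV] at this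
      have htri : |(1 - α t) * x t (h (i t)) + α t * (F z (i t) + w t)| ≤
          (1 - α t) * |x t (h (i t))| + α t * (|F z (i t)| + |w t|) := by
        calc |(1 - α t) * x t (h (i t)) + α t * (F z (i t) + w t)|
            ≤ |(1 - α t) * x t (h (i t))| + |α t * (F z (i t) + w t)| := abs_add_le _ _
          _ = (1 - α t) * |x t (h (i t))| + α t * |F z (i t) + w t| := by
              rw [abs_mul, abs_mul, abs_of_nonneg (by linarith : (0:ℝ) ≤ 1 - α t),
                abs_of_nonneg ha0]
          _ ≤ (1 - α t) * |x t (h (i t))| + α t * (|F z (i t)| + |w t|) := by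
              gcongr
              exact abs_add_le _ _
      rw [div_le_iff₀ hV]
      have hwd : wbar ≤ wbar / vmin * v (h (i t)) := by
        have h1 : wbar / vmin * vmin = wbar := div_mul_cancel₀ _ hvmin_pos.ne'
        have h2 : wbar / vmin * vmin ≤ wbar / vmin * v (h (i t)) :=
          mul_le_mul_of_nonneg_left (hvmin_le _) (div_nonneg hwbar hvmin_pos.le)
        linarith
      have hwt : |w t| ≤ wbar := hw t
      have hBidV : (γ * B + C) * v (h (i t)) + wbar / vmin * v (h (i t))
          = B * v (h (i t)) := by
        linear_combination v (h (i t)) * hBid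
      have l1 := mul_le_mul_of_nonneg_left hX (by linarith : (0:ℝ) ≤ 1 - α t)
      have l2 := mul_le_mul_of_nonneg_left hFz ha0
      have l3 := mul_le_mul_of_nonneg_left hwt ha0
      have l4 := mul_le_mul_of_nonneg_left hwd ha0
      have l5 : α t * ((γ * B + C) * v (h (i t))) + α t * (wbar / vmin * v (h (i t)))
          = α t * (B * v (h (i t))) := by linear_combination α t * hBidV
      nlinarith [htri, l1, l2, l3, l4, l5]
    · simp only [if_neg hj]
      exact hxt j
end

section
/- Let θ* ∈ ℝ^M be the fixed point of Π T^{(λ)}(Φ ·), where T^{(λ)} is the λ-averaged Bellman operator of a finite Markov chain with discount γ ∈ [0,1) and λ ∈ [0,1), with value function V* (the fixed point of T^{(λ)}). Then ‖Φ θ* - V*‖_∞ ≤ ((1 - λγ)/(1 - γ)) ‖Φ Π V* - V*‖_∞. In particular, if h aggregates only states whose values differ by at most ζ, then ‖Φ θ* - V*‖_∞ ≤ (1 - λγ)ζ/(1 - γ). -/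
/-- Averaging lemma: the weighted average over a fiber is within `C` of another
average when the pointwise differences on the fiber are bounded by `C`. -/
lemma pi_diff_le {N M : Type*} [Fintype N] [DecidableEq M]
    (h : N → M) (d : N → ℝ) (hd : ∀ i, 0 < d i)
    (Pi' : (N → ℝ) → (M → ℝ))
    (hPi : ∀ V j, Pi' V j =
      (∑ i ∈ Finset.univ.filter (fun i => h i = j), d i * V i) /
      (∑ i ∈ Finset.univ.filter (fun i => h i = j), d i))
    (V W : N → ℝ) (j : M) (i0 : N) (hi0 : h i0 = j)
    (C : ℝ) (hC : ∀ i, h i = j → |V i - W i| ≤ C) :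
    |Pi' V j - Pi' W j| ≤ C := by
  set F := Finset.univ.filter (fun i => h i = j) with hF
  have hne : F.Nonempty := ⟨i0, by simp [hF, hi0]⟩
  have hS : 0 < ∑ i ∈ F, d i := Finset.sum_pos (fun i _ => hd i) hne
  have hC0 : 0 ≤ C := le_trans (abs_nonneg _) (hC i0 hi0)
  rw [hPi, hPi, div_sub_div_same, ← Finset.sum_sub_distrib]
  have heq : ∀ i ∈ F, d i * V i - d i * W i = d i * (V i - W i) := by
    intro i _; ring
  rw [Finset.sum_congr rfl heq, abs_div, abs_of_pos hS, div_le_iff₀ hS]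
  calc |∑ i ∈ F, d i * (V i - W i)| ≤ ∑ i ∈ F, |d i * (V i - W i)| :=
        Finset.abs_sum_le_sum_abs _ _
    _ ≤ ∑ i ∈ F, d i * C := by
        apply Finset.sum_le_sum
        intro i hi
        rw [abs_mul, abs_of_pos (hd i)]
        exact mul_le_mul_of_nonneg_left (hC i (by simpa [hF] using hi)) (hd i).le
    _ = C * ∑ i ∈ F, d i := by rw [← Finset.sum_mul]; ring

/-- For θ* the fixed point of Π T^{(λ)}(Φ ·), where T^{(λ)} is a
    (γ(1-λ)/(1-γλ))-contraction in ‖·‖_∞ with fixed point V*, we have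
    ‖Φθ* - V*‖_∞ ≤ ((1-λγ)/(1-γ)) ‖ΦΠV* - V*‖_∞; in particular, if aggregated
    states have values within ζ, then ‖Φθ* - V*‖_∞ ≤ (1-λγ)ζ/(1-γ). -/
theorem stmt_11 {N M : Type*} [Fintype N] [Fintype M] [DecidableEq M] [Nonempty N]
    (h : N → M) (hsurj : Function.Surjective h)
    (d : N → ℝ) (hd : ∀ i, 0 < d i) (hdsum : ∑ i, d i = 1)
    (γ lam : ℝ) (hγ0 : 0 ≤ γ) (hγ1 : γ < 1) (hlam0 : 0 ≤ lam) (hlam1 : lam < 1)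
    (T : (N → ℝ) → (N → ℝ))
    (hT : ∀ V W : N → ℝ,
      (⨆ i, |T V i - T W i|) ≤ (γ * (1 - lam) / (1 - γ * lam)) * ⨆ i, |V i - W i|)
    (Vstar : N → ℝ) (hVfix : T Vstar = Vstar)
    (Pi' : (N → ℝ) → (M → ℝ))
    (hPi : ∀ V j, Pi' V j =
      (∑ i ∈ Finset.univ.filter (fun i => h i = j), d i * V i) /
      (∑ i ∈ Finset.univ.filter (fun i => h i = j), d i))
    (θstar : M → ℝ) (hθ : Pi' (T (fun i => θstar (h i))) = θstar)
    (ζ : ℝ) (hζ : ∀ i i', h i = h i' → |Vstar i - Vstar i'| ≤ ζ) :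
    ((⨆ i, |θstar (h i) - Vstar i|) ≤
      ((1 - lam * γ) / (1 - γ)) * (⨆ i, |Pi' Vstar (h i) - Vstar i|)) ∧
    ((⨆ i, |θstar (h i) - Vstar i|) ≤ (1 - lam * γ) * ζ / (1 - γ)) := by
  have hγlam : γ * lam < 1 :=
    lt_of_le_of_lt (by nlinarith) hγ1
  have hden : (0:ℝ) < 1 - γ * lam := by linarith
  have hγpos : (0:ℝ) < 1 - γ := by linarith
  set c : ℝ := γ * (1 - lam) / (1 - γ * lam) with hc
  set A : ℝ := ⨆ i, |θstar (h i) - Vstar i| with hA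
  set B : ℝ := ⨆ i, |Pi' Vstar (h i) - Vstar i| with hB
  have bddA : BddAbove (Set.range fun i => |θstar (h i) - Vstar i|) :=
    Set.Finite.bddAbove (Set.finite_range _)
  have bddB : BddAbove (Set.range fun i => |Pi' Vstar (h i) - Vstar i|) :=
    Set.Finite.bddAbove (Set.finite_range _)
  have bddT : BddAbove (Set.range fun i =>
      |T (fun k => θstar (h k)) i - T Vstar i|) :=
    Set.Finite.bddAbove (Set.finite_range _)
  have hA0 : 0 ≤ A := le_trans (abs_nonneg _) (le_ciSup bddA (Classical.arbitrary N))
  -- pointwise bound on the contracted image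
  have hTbound : ∀ i, |T (fun k => θstar (h k)) i - Vstar i| ≤ c * A := by
    intro i
    have h1 : |T (fun k => θstar (h k)) i - T Vstar i| ≤ c * A :=
      le_trans (le_ciSup bddT i) (hT _ _)
    rwa [hVfix] at h1
  -- main estimate A ≤ c*A + B
  have hmain : A ≤ c * A + B := by
    apply ciSup_le
    intro i
    have tri : |θstar (h i) - Vstar i| ≤
        |θstar (h i) - Pi' Vstar (h i)| + |Pi' Vstar (h i) - Vstar i| :=
      abs_sub_le _ _ _
    have t1 : |θstar (h i) - Pi' Vstar (h i)| ≤ c * A := by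
      have := pi_diff_le h d hd Pi' hPi (T (fun k => θstar (h k))) Vstar (h i) i rfl
        (c * A) (fun k _ => hTbound k)
      rw [hθ] at this
      simpa using this
    have t2 : |Pi' Vstar (h i) - Vstar i| ≤ B := le_ciSup bddB i
    linarith
  have hcA : (1 - γ * lam) * (c * A) = γ * (1 - lam) * A := by
    rw [hc]; field_simp
  have key : A * (1 - γ) ≤ B * (1 - γ * lam) := by
    have h2 : (A - B) * (1 - γ * lam) ≤ (c * A) * (1 - γ * lam) :=
      mul_le_mul_of_nonneg_right (by linarith) hden.le
    nlinarith [hcA]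
  have goal1 : A ≤ (1 - lam * γ) / (1 - γ) * B := by
    rw [div_mul_eq_mul_div, le_div_iff₀ hγpos]
    nlinarith [key]
  refine ⟨goal1, ?_⟩
  -- second part
  have hζ0 : 0 ≤ ζ := by
    have := hζ (Classical.arbitrary N) (Classical.arbitrary N) rfl
    simpa using this
  have hBζ : B ≤ ζ := by
    apply ciSup_le
    intro i
    have hconst : Pi' (fun _ => Vstar i) (h i) = Vstar i := by
      rw [hPi]
      have hS : 0 < ∑ k ∈ Finset.univ.filter (fun k => h k = h i), d k :=
        Finset.sum_pos (fun k _ => hd k) ⟨i, by simp⟩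
      rw [← Finset.sum_mul, mul_div_cancel_left₀ _ hS.ne']
    have := pi_diff_le h d hd Pi' hPi Vstar (fun _ => Vstar i) (h i) i rfl ζ
      (fun k hk => hζ k i hk)
    rwa [hconst] at this
  have hcoef : 0 ≤ (1 - lam * γ) / (1 - γ) := by
    apply div_nonneg _ hγpos.le
    nlinarith
  calc A ≤ (1 - lam * γ) / (1 - γ) * B := goal1
    _ ≤ (1 - lam * γ) / (1 - γ) * ζ := mul_le_mul_of_nonneg_left hBζ hcoef
    _ = (1 - lam * γ) * ζ / (1 - γ) := by ring
end

section
/- Let α_t = H/(t + t_0) for t ≥ 0 with constants H > 0, σ' ∈ (0,1] satisfying Hσ' ≥ 2, and t_0 ≥ 4H. Define b_{k,t} = α_k d' ∏_{l=k+1}^{t} (1 - α_l d') for a constant d' with σ' ≤ d' ≤ 1, and β_{k,t} = α_k ∏_{l=k+1}^t (1 - α_l σ'). Then α_k ∏_{l=k+1}^t (1 - α_l d') ≤ H/(t + t_0) for all τ ≤ k ≤ t. -/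
/-- With step sizes α_t = H/(t+t₀), Hσ' ≥ 2, t₀ ≥ 4H and
    σ' ≤ d' ≤ 1, one has α_k ∏_{l=k+1}^t (1 - α_l d') ≤ H/(t + t₀) for τ ≤ k ≤ t. -/
theorem stmt_12 (H σ' t0 d' : ℝ)
    (hH : 0 < H) (hσ0 : 0 < σ') (hσ1 : σ' ≤ 1) (hHσ : 2 ≤ H * σ')
    (ht0 : 4 * H ≤ t0)
    (hd1 : σ' ≤ d') (hd2 : d' ≤ 1)
    (α : ℕ → ℝ) (hα : ∀ t : ℕ, α t = H / (t + t0))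
    (τ k t : ℕ) (hτk : τ ≤ k) (hkt : k ≤ t) :
    α k * ∏ l ∈ Finset.Icc (k + 1) t, (1 - α l * d') ≤ H / (t + t0) := by
  have ht0pos : (0:ℝ) < t0 := by linarith
  have hHd : 2 ≤ H * d' := le_trans hHσ (by nlinarith)
  induction t, hkt using Nat.le_induction with
  | base =>
    have h : Finset.Icc (k+1) k = ∅ := by simp
    rw [h, Finset.prod_empty, mul_one, hα]
  | succ t ht ih =>
    have hp : (0:ℝ) < (t:ℝ) + t0 := by positivity
    have hq : (0:ℝ) < (t:ℝ) + 1 + t0 := by positivity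
    rw [Finset.prod_Icc_succ_top (by omega), ← mul_assoc]
    have hx : α (t+1) * d' = H * d' / ((t:ℝ)+1+t0) := by
      rw [hα]; push_cast; ring
    have hx1 : α (t+1) * d' ≤ 1 := by
      rw [hx, div_le_one hq]; nlinarith
    have hA0 : 0 ≤ α k * ∏ l ∈ Finset.Icc (k + 1) t, (1 - α l * d') := by
      apply mul_nonneg
      · rw [hα]; positivity
      · apply Finset.prod_nonneg
        intro l hl
        rw [hα]
        have hl0 : (0:ℝ) ≤ (l:ℝ) := Nat.cast_nonneg l
        have hlq : (0:ℝ) < (l:ℝ) + t0 := by positivity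
        have : H / ((l:ℝ) + t0) * d' ≤ 1 := by
          rw [div_mul_eq_mul_div, div_le_one hlq]
          nlinarith
        linarith
    calc α k * (∏ l ∈ Finset.Icc (k + 1) t, (1 - α l * d')) * (1 - α (t+1)*d')
        ≤ (H/((t:ℝ)+t0)) * (1 - α (t+1)*d') := by
          apply mul_le_mul_of_nonneg_right _ (by linarith)
          exact_mod_cast ih
      _ ≤ H/(((t:ℕ)+1:ℕ) + t0) := by
          push_cast
          rw [hx, div_mul_eq_mul_div, div_le_div_iff₀ hp hq]
          have hexp : H * (1 - H * d' / ((t:ℝ)+1+t0)) * ((t:ℝ)+1+t0)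
              = H * (((t:ℝ)+1+t0) - H * d') := by
            field_simp
          rw [hexp]
          nlinarith
end

section
/- Suppose σ' H (1 - √γ) ≥ 1, t_0 ≥ 1, α_t = H/(t + t_0) with α_0 ≤ 1/2, and d' ∈ [σ', 1]. Define b_{k,t} = α_k d' ∏_{l=k+1}^t (1 - α_l d'). Then for every exponent ω with 0 < ω ≤ 1 and every t ≥ τ, ∑_{k=τ}^t b_{k,t} · (k + t_0)^{-ω} ≤ (1/√γ) (t + 1 + t_0)^{-ω}. -/
lemma key_aux (ω x c : ℝ) (hω0 : 0 < ω) (hω1 : ω ≤ 1) (hx : 1 ≤ x)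
    (hc : c ≤ x / (x + 1)) :
    c * x ^ (-ω) ≤ (x + 1) ^ (-ω) := by
  have hx0 : (0:ℝ) < x := lt_of_lt_of_le one_pos hx
  have hx1 : (0:ℝ) < x + 1 := by linarith
  have hb0 : 0 < x / (x + 1) := by positivity
  have hb1 : x / (x + 1) ≤ 1 := by rw [div_le_one hx1]; linarith
  have h1 : (x / (x + 1)) ^ (1:ℝ) ≤ (x / (x + 1)) ^ ω :=
    Real.rpow_le_rpow_of_exponent_ge hb0 hb1 hω1
  rw [Real.rpow_one] at h1
  have h2 : (x + 1) ^ (-ω) = (x / (x + 1)) ^ ω * x ^ (-ω) := by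
    rw [Real.div_rpow hx0.le hx1.le, Real.rpow_neg hx0.le, Real.rpow_neg hx1.le]
    have e1 : x ^ ω ≠ 0 := ne_of_gt (Real.rpow_pos_of_pos hx0 _)
    have e2 : (x + 1) ^ ω ≠ 0 := ne_of_gt (Real.rpow_pos_of_pos hx1 _)
    field_simp
  rw [h2]
  exact mul_le_mul_of_nonneg_right (hc.trans h1)
    (Real.rpow_pos_of_pos hx0 _).le

/-- With σ'H(1-√γ) ≥ 1, t₀ ≥ 1, α_t = H/(t+t₀), α₀ ≤ 1/2,
    d' ∈ [σ',1], and 0 < ω ≤ 1: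
    ∑_{k=τ}^t b_{k,t} (k+t₀)^{-ω} ≤ (1/√γ)(t+1+t₀)^{-ω}. -/
theorem stmt_13 (γ H σ' t0 d' ω : ℝ)
    (hγ0 : 0 < γ) (hγ1 : γ < 1)
    (hH : 0 < H) (hσ : 0 < σ') (ht0 : 1 ≤ t0)
    (hcond : 1 ≤ σ' * H * (1 - Real.sqrt γ))
    (α : ℕ → ℝ) (hα : ∀ t : ℕ, α t = H / (t + t0)) (hα0 : α 0 ≤ 1 / 2)
    (hd1 : σ' ≤ d') (hd2 : d' ≤ 1)
    (hω0 : 0 < ω) (hω1 : ω ≤ 1)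
    (τ t : ℕ) (hτt : τ ≤ t) :
    ∑ k ∈ Finset.Icc τ t,
        (α k * d' * ∏ l ∈ Finset.Icc (k + 1) t, (1 - α l * d')) * ((k : ℝ) + t0) ^ (-ω)
      ≤ (1 / Real.sqrt γ) * ((t : ℝ) + 1 + t0) ^ (-ω) := by
  have hsg0 : 0 < Real.sqrt γ := Real.sqrt_pos.mpr hγ0
  have hsg1 : Real.sqrt γ < 1 := by
    have := Real.sqrt_lt_sqrt hγ0.le hγ1
    rwa [Real.sqrt_one] at this
  have hsginv : 1 ≤ 1 / Real.sqrt γ := by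
    rw [le_div_iff₀ hsg0]; linarith
  have hd0 : 0 < d' := lt_of_lt_of_le hσ hd1
  -- positivity of n + t0
  have hnt : ∀ n : ℕ, (1:ℝ) ≤ (n : ℝ) + t0 := by
    intro n
    have : (0:ℝ) ≤ n := Nat.cast_nonneg n
    linarith
  have hαpos : ∀ n : ℕ, 0 < α n := by
    intro n; rw [hα]; exact div_pos hH (by linarith [hnt n])
  have hαmono : ∀ n : ℕ, α n ≤ α 0 := by
    intro n
    rw [hα, hα]
    push_cast
    apply div_le_div_of_nonneg_left hH.le (by linarith) (by
      have : (0:ℝ) ≤ n := Nat.cast_nonneg n; linarith)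
  have hhalf : ∀ n : ℕ, α n * d' ≤ 1 / 2 := by
    intro n
    calc α n * d' ≤ α n * 1 := by
          exact mul_le_mul_of_nonneg_left hd2 (hαpos n).le
      _ = α n := mul_one _
      _ ≤ α 0 := hαmono n
      _ ≤ 1 / 2 := hα0
  -- induction on t via Nat.le_induction
  induction t, hτt using Nat.le_induction with
  | base =>
      rw [Finset.Icc_self, Finset.sum_singleton]
      have : Finset.Icc (τ + 1) τ = ∅ := by
        apply Finset.Icc_eq_empty; omega
      rw [this, Finset.prod_empty, mul_one]
      have hx := hnt τ
      have hkey : (α τ * d') * ((τ:ℝ) + t0) ^ (-ω) ≤ ((τ:ℝ) + t0 + 1) ^ (-ω) := by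
        apply key_aux ω _ _ hω0 hω1 hx
        have h1 : (1:ℝ)/2 ≤ ((τ:ℝ) + t0) / ((τ:ℝ) + t0 + 1) := by
          rw [le_div_iff₀ (by linarith)]; linarith
        exact le_trans (hhalf τ) h1
      calc (α τ * d') * ((τ:ℝ) + t0) ^ (-ω) ≤ ((τ:ℝ) + t0 + 1) ^ (-ω) := hkey
        _ = ((τ:ℝ) + 1 + t0) ^ (-ω) := by ring_nf
        _ ≤ (1 / Real.sqrt γ) * ((τ:ℝ) + 1 + t0) ^ (-ω) := by
            nth_rewrite 1 [← one_mul (((τ:ℝ) + 1 + t0) ^ (-ω))]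
            exact mul_le_mul_of_nonneg_right hsginv
              (Real.rpow_pos_of_pos (by linarith [hnt τ]) _).le
  | succ t ht ih =>
      set s : ℝ := (t:ℝ) + 1 + t0 with hs
      have hs1 : 1 ≤ s := by have := hnt t; simp [hs]; linarith
      have hs0 : 0 < s := by linarith
      have hcast : ((t + 1 : ℕ) : ℝ) + t0 = s := by push_cast [hs]; ring
      have hsum :
          ∑ k ∈ Finset.Icc τ (t + 1),
            (α k * d' * ∏ l ∈ Finset.Icc (k + 1) (t + 1), (1 - α l * d')) * ((k : ℝ) + t0) ^ (-ω)
          = (1 - α (t+1) * d') *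
            (∑ k ∈ Finset.Icc τ t,
              (α k * d' * ∏ l ∈ Finset.Icc (k + 1) t, (1 - α l * d')) * ((k : ℝ) + t0) ^ (-ω))
            + (α (t+1) * d') * s ^ (-ω) := by
        rw [Finset.sum_Icc_succ_top (by omega : τ ≤ t + 1)]
        have hempty : Finset.Icc (t + 1 + 1) (t + 1) = ∅ := by
          apply Finset.Icc_eq_empty; omega
        rw [hempty, Finset.prod_empty, mul_one, hcast]
        rw [Finset.mul_sum]
        congr 1
        apply Finset.sum_congr rfl
        intro k hk
        rw [Finset.mem_Icc] at hk
        rw [Finset.prod_Icc_succ_top (by omega : k + 1 ≤ t + 1)]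
        ring
      rw [hsum]
      have ha : α (t+1) * d' ≤ 1/2 := hhalf (t+1)
      have ha0 : 0 < α (t+1) * d' := mul_pos (hαpos _) hd0
      have h1ma : 0 ≤ 1 - α (t+1) * d' := by linarith
      have step1 : (1 - α (t+1) * d') *
            (∑ k ∈ Finset.Icc τ t,
              (α k * d' * ∏ l ∈ Finset.Icc (k + 1) t, (1 - α l * d')) * ((k : ℝ) + t0) ^ (-ω))
            + (α (t+1) * d') * s ^ (-ω)
          ≤ (1 - α (t+1) * d') * ((1 / Real.sqrt γ) * s ^ (-ω)) + (α (t+1) * d') * s ^ (-ω) := by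
        gcongr
      refine le_trans step1 ?_
      -- combine: = (1/√γ) * (1 - a(1-√γ)) * s^(-ω)
      set a := α (t+1) * d' with hadef
      have hcomb : (1 - a) * ((1 / Real.sqrt γ) * s ^ (-ω)) + a * s ^ (-ω)
          = (1 / Real.sqrt γ) * ((1 - a * (1 - Real.sqrt γ)) * s ^ (-ω)) := by
        field_simp
        ring
      rw [hcomb]
      have hclow : 1 - a * (1 - Real.sqrt γ) ≤ s / (s + 1) := by
        have haα : α (t+1) = H / s := by rw [hα]; push_cast [hs]; ring_nf
        have h1 : 1 / s ≤ a * (1 - Real.sqrt γ) := by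
          rw [div_le_iff₀ hs0]
          have he : a * (1 - Real.sqrt γ) * s = H * d' * (1 - Real.sqrt γ) := by
            rw [hadef, haα]; field_simp
          rw [he]
          have h2 : σ' * H * (1 - Real.sqrt γ) ≤ H * d' * (1 - Real.sqrt γ) := by
            nlinarith
          linarith
        have h3 : 1 - (1:ℝ)/s ≤ s / (s + 1) := by
          rw [le_div_iff₀ (by linarith : (0:ℝ) < s + 1)]
          have he : 1/s * s = 1 := by field_simp
          have hp : 0 ≤ 1/s := by positivity
          nlinarith
        linarith
      have hkey := key_aux ω s _ hω0 hω1 hs1 hclow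
      have hfin : ((t+1 : ℕ) : ℝ) + 1 + t0 = s + 1 := by push_cast [hs]; ring
      rw [hfin]
      exact mul_le_mul_of_nonneg_left hkey (by positivity)
end

section
/- Consider Q-learning with state-action aggregation: let M = (S, A, P, R, γ) be a finite MDP with optimal Q-function Q*, h a surjection from S×A onto an abstract set 𝓜, and suppose there exists q : 𝓜 → ℝ with ‖Φq − Q*‖_∞ ≤ ε (approximate Q*-irrelevance). Let d be a strictly positive probability vector on S×A, Π = (ΦᵀDΦ)^{-1}ΦᵀD, F the Bellman optimality operator F_{s,a}(Q) = R_{s,a} + γ E_{s'∼P(·|s,a)} max_{a'} Q_{s',a'}, and θ* the unique fixed point of Π F(Φ ·). Then ‖Φ θ* − Q*‖_∞ ≤ 2ε/(1 − γ). -/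
/-- Q-learning with state–action aggregation. If there is an abstract
    q with ‖Φq − Q*‖_∞ ≤ ε, and θ* is the fixed point of Π F(Φ ·) for the Bellman
    optimality operator F and a positive stationary distribution d, then
    ‖Φ θ* − Q*‖_∞ ≤ 2ε/(1 − γ). -/
theorem stmt_19 {S A 𝓜 : Type*} [Fintype S] [Fintype A] [Fintype 𝓜]
    [Nonempty S] [Nonempty A] [DecidableEq 𝓜]
    (P : S → A → S → ℝ) (hP0 : ∀ s a s', 0 ≤ P s a s')
    (hP1 : ∀ s a, ∑ s', P s a s' = 1)
    (R : S → A → ℝ) (γ : ℝ) (hγ0 : 0 ≤ γ) (hγ1 : γ < 1)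
    (F : (S → A → ℝ) → (S → A → ℝ))
    (hF : ∀ Q s a, F Q s a = R s a + γ * ∑ s', P s a s' * (⨆ a', Q s' a'))
    (Qstar : S → A → ℝ) (hQ : F Qstar = Qstar)
    (h : S × A → 𝓜) (hsurj : Function.Surjective h)
    (q : 𝓜 → ℝ) (ε : ℝ) (hq : ∀ s a, |q (h (s, a)) - Qstar s a| ≤ ε)
    (d : S × A → ℝ) (hd : ∀ sa, 0 < d sa) (hdsum : ∑ sa, d sa = 1)
    (θstar : 𝓜 → ℝ)
    (hθ : ∀ m, θstar m =
      (∑ sa ∈ Finset.univ.filter (fun sa => h sa = m),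
          d sa * F (fun s a => θstar (h (s, a))) sa.1 sa.2) /
      (∑ sa ∈ Finset.univ.filter (fun sa => h sa = m), d sa)) :
    ∀ s a, |θstar (h (s, a)) - Qstar s a| ≤ 2 * ε / (1 - γ) := by
  have hγ' : 0 < 1 - γ := by linarith
  have hεnn : 0 ≤ ε := le_trans (abs_nonneg _) (hq (Classical.arbitrary S) (Classical.arbitrary A))
  set Qθ : S → A → ℝ := fun s a => θstar (h (s, a)) with hQθ
  have hne : (Finset.univ : Finset (S × A)).Nonempty := Finset.univ_nonempty
  set Δ := Finset.univ.sup' hne (fun sa : S × A => |Qθ sa.1 sa.2 - Qstar sa.1 sa.2|) with hΔdef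
  have hΔle : ∀ s a, |Qθ s a - Qstar s a| ≤ Δ := fun s a =>
    Finset.le_sup' (f := fun sa : S × A => |Qθ sa.1 sa.2 - Qstar sa.1 sa.2|) (Finset.mem_univ (s, a))
  have hΔ0 : 0 ≤ Δ :=
    le_trans (abs_nonneg _) (hΔle (Classical.arbitrary S) (Classical.arbitrary A))
  have hsup : ∀ s', |(⨆ a', Qθ s' a') - (⨆ a', Qstar s' a')| ≤ Δ := by
    intro s'
    have hb1 : BddAbove (Set.range (Qθ s')) := (Set.finite_range _).bddAbove
    have hb2 : BddAbove (Set.range (Qstar s')) := (Set.finite_range _).bddAbove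
    rw [abs_sub_le_iff]
    constructor
    · rw [sub_le_iff_le_add']
      refine ciSup_le fun a => ?_
      have h1 := abs_le.mp (hΔle s' a)
      have h2 : Qθ s' a ≤ Qstar s' a + Δ := by linarith [h1.1, h1.2]
      exact h2.trans (add_le_add_left (le_ciSup hb2 a) Δ)
    · rw [sub_le_iff_le_add']
      refine ciSup_le fun a => ?_
      have h1 := abs_le.mp (hΔle s' a)
      have h2 : Qstar s' a ≤ Qθ s' a + Δ := by linarith [h1.1, h1.2]
      exact h2.trans (add_le_add_left (le_ciSup hb1 a) Δ)
  have hcontr : ∀ s a, |F Qθ s a - F Qstar s a| ≤ γ * Δ := by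
    intro s a
    rw [hF, hF]
    have key : R s a + γ * (∑ s', P s a s' * (⨆ a', Qθ s' a'))
        - (R s a + γ * (∑ s', P s a s' * (⨆ a', Qstar s' a')))
        = γ * ∑ s', P s a s' * ((⨆ a', Qθ s' a') - (⨆ a', Qstar s' a')) := by
      simp only [Finset.mul_sum]
      have key2 : ∀ X Y : ℝ, R s a + X - (R s a + Y) = X - Y := fun X Y => by ring
      rw [key2, ← Finset.sum_sub_distrib]
      exact Finset.sum_congr rfl fun i _ => by ring
    rw [key, abs_mul, abs_of_nonneg hγ0]
    have hsum : |∑ s', P s a s' * ((⨆ a', Qθ s' a') - (⨆ a', Qstar s' a'))| ≤ Δ := by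
      calc |∑ s', P s a s' * ((⨆ a', Qθ s' a') - (⨆ a', Qstar s' a'))|
          ≤ ∑ s', |P s a s' * ((⨆ a', Qθ s' a') - (⨆ a', Qstar s' a'))| :=
            Finset.abs_sum_le_sum_abs _ _
        _ ≤ ∑ s', P s a s' * Δ := by
            refine Finset.sum_le_sum fun s' _ => ?_
            rw [abs_mul, abs_of_nonneg (hP0 s a s')]
            exact mul_le_mul_of_nonneg_left (hsup s') (hP0 s a s')
        _ = Δ := by rw [← Finset.sum_mul, hP1, one_mul]
    exact mul_le_mul_of_nonneg_left hsum hγ0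
  have hblock : ∀ s a, |Qθ s a - Qstar s a| ≤ γ * Δ + 2 * ε := by
    intro s a
    set m := h (s, a) with hm
    set B := Finset.univ.filter (fun sa : S × A => h sa = m) with hB
    have hmem : (s, a) ∈ B := by simp [hB, hm]
    have hBne : B.Nonempty := ⟨(s, a), hmem⟩
    have hDpos : 0 < ∑ sa ∈ B, d sa := Finset.sum_pos (fun sa _ => hd sa) hBne
    have hrepr : Qθ s a - Qstar s a =
        (∑ sa ∈ B, d sa * (F Qθ sa.1 sa.2 - Qstar s a)) / (∑ sa ∈ B, d sa) := by
      have expand : ∑ sa ∈ B, d sa * (F Qθ sa.1 sa.2 - Qstar s a)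
          = (∑ sa ∈ B, d sa * F Qθ sa.1 sa.2) - (∑ sa ∈ B, d sa) * Qstar s a := by
        rw [Finset.sum_mul, ← Finset.sum_sub_distrib]
        congr 1; funext sa; ring
      rw [expand, sub_div, mul_div_cancel_left₀ _ hDpos.ne']
      rw [show Qθ s a = θstar m from rfl, hθ m]
    rw [hrepr, abs_div, abs_of_pos hDpos]
    rw [div_le_iff₀ hDpos]
    calc |∑ sa ∈ B, d sa * (F Qθ sa.1 sa.2 - Qstar s a)|
        ≤ ∑ sa ∈ B, |d sa * (F Qθ sa.1 sa.2 - Qstar s a)| := Finset.abs_sum_le_sum_abs _ _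
      _ ≤ ∑ sa ∈ B, d sa * (γ * Δ + 2 * ε) := by
          refine Finset.sum_le_sum fun sa hsa => ?_
          rw [abs_mul, abs_of_pos (hd sa)]
          refine mul_le_mul_of_nonneg_left ?_ (hd sa).le
          have hhsa : h sa = m := by
            simp only [hB, Finset.mem_filter] at hsa; exact hsa.2
          have hFfix : F Qstar sa.1 sa.2 = Qstar sa.1 sa.2 := by rw [hQ]
          have h1 : |F Qθ sa.1 sa.2 - F Qstar sa.1 sa.2| ≤ γ * Δ := hcontr sa.1 sa.2
          have h2 : |q m - Qstar sa.1 sa.2| ≤ ε := by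
            have := hq sa.1 sa.2
            rwa [show (sa.1, sa.2) = sa from rfl, hhsa] at this
          have h3 : |q m - Qstar s a| ≤ ε := hq s a
          rw [hFfix] at h1
          have e1 := abs_le.mp h1
          have e2 := abs_le.mp h2
          have e3 := abs_le.mp h3
          rw [abs_le]
          constructor <;> linarith [e1.1, e1.2, e2.1, e2.2, e3.1, e3.2]
      _ = (γ * Δ + 2 * ε) * ∑ sa ∈ B, d sa := by rw [← Finset.sum_mul]; ring
  have hΔbound : Δ ≤ γ * Δ + 2 * ε :=
    Finset.sup'_le hne _ fun sa _ => hblock sa.1 sa.2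
  have hΔfin : Δ ≤ 2 * ε / (1 - γ) := by
    rw [le_div_iff₀ hγ']; nlinarith
  intro s a
  exact (hΔle s a).trans hΔfin
end
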